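/- Let q be real with 0 < q < 1 and let α ≥ 1, n ≥ 0 be integers. For every odd positive integer k, q^k · Ẽ_{n,q}(k|α) + Ẽ_{n,q}(α) = [2:q] · Σ_{l=0}^{k−1} (−1)^l q^l [l:q^α]^n. -/

import Mathlib

open scoped BigOperators

/-- `[x:q] = (q^x - 1)/(q - 1)` with real exponentiation. -/
noncomputable def qNum (q x : ℝ) : ℝ := (q ^ x - 1) / (q - 1)

/-- Weighted `q`-Euler polynomial `Ẽ_{n,q}(x|α) = [2:q] ∑_{m≥0} (-1)^m q^m [m+x:q^α]^n`. -/
noncomputable def qEuler (q : ℝ) (α n : ℕ) (x : ℝ) : ℝ :=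
  qNum q 2 * ∑' m : ℕ, (-1 : ℝ) ^ m * q ^ m * (qNum (q ^ α) ((m : ℝ) + x)) ^ n

lemma qNum_nat_bound (Q : ℝ) (hQ0 : 0 < Q) (hQ1 : Q < 1) (m : ℕ) :
    |qNum Q (m : ℝ)| ≤ 1 / (1 - Q) := by
  rw [qNum, Real.rpow_natCast]
  have h1 : (0:ℝ) < 1 - Q := by linarith
  have h2 : Q ^ m ≤ 1 := pow_le_one₀ hQ0.le hQ1.le
  have h3 : 0 < Q ^ m := pow_pos hQ0 m
  have heq : (Q ^ m - 1) / (Q - 1) = (1 - Q ^ m) / (1 - Q) := by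
    rw [← neg_div_neg_eq, neg_sub, neg_sub]
  rw [heq, abs_of_nonneg (div_nonneg (by linarith) h1.le)]
  gcongr
  linarith

lemma summable_aux (q : ℝ) (hq0 : 0 < q) (hq1 : q < 1) (α n : ℕ) (hα : 1 ≤ α) :
    Summable (fun m : ℕ => (-1 : ℝ) ^ m * q ^ m * (qNum (q ^ α) (m : ℝ)) ^ n) := by
  have hQ0 : (0:ℝ) < q ^ α := pow_pos hq0 α
  have hQ1 : q ^ α < 1 := pow_lt_one₀ hq0.le hq1 (by omega)
  apply Summable.of_norm_bounded (g := fun m => (1 / (1 - q ^ α)) ^ n * q ^ m)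
    ((summable_geometric_of_lt_one hq0.le hq1).mul_left _)
  · intro m
    rw [norm_mul, norm_mul, norm_pow, norm_pow, norm_neg, norm_one, one_pow, one_mul,
      Real.norm_eq_abs, Real.norm_eq_abs, abs_of_pos hq0, mul_comm]
    rw [abs_pow]
    apply mul_le_mul_of_nonneg_right _ (pow_nonneg hq0.le m)
    exact pow_le_pow_left₀ (abs_nonneg _) (qNum_nat_bound _ hQ0 hQ1 m) n

theorem statement2 (q : ℝ) (hq0 : 0 < q) (hq1 : q < 1)
    (α : ℕ) (hα : 1 ≤ α) (n : ℕ) (k : ℕ) (hk : 0 < k) (hko : Odd k) :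
    q ^ k * qEuler q α n k + qEuler q α n 0 =
      qNum q 2 * ∑ l ∈ Finset.range k, (-1 : ℝ) ^ l * q ^ l * (qNum (q ^ α) l) ^ n := by
  set a : ℕ → ℝ := fun m => (-1 : ℝ) ^ m * q ^ m * (qNum (q ^ α) (m : ℝ)) ^ n with ha
  have hsum : Summable a := summable_aux q hq0 hq1 α n hα
  have h0 : qEuler q α n 0 = qNum q 2 * ∑' m : ℕ, a m := by
    unfold qEuler
    congr 1
    apply tsum_congr
    intro m
    simp [ha]
  have hkeq : qEuler q α n k = qNum q 2 * ∑' m : ℕ, (-1 : ℝ) ^ m * q ^ m *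
      (qNum (q ^ α) ((m + k : ℕ) : ℝ)) ^ n := by
    unfold qEuler
    congr 1
    apply tsum_congr
    intro m
    push_cast
    ring_nf
  have hodd : ∀ m : ℕ, q ^ k * ((-1 : ℝ) ^ m * q ^ m * (qNum (q ^ α) ((m + k : ℕ) : ℝ)) ^ n)
      = -(a (m + k)) := by
    intro m
    have : (-1 : ℝ) ^ (m + k) = -(-1 : ℝ) ^ m := by
      rw [pow_add, hko.neg_one_pow]; ring
    simp only [ha, this, pow_add]
    ring
  have htail : q ^ k * qEuler q α n k = qNum q 2 * -(∑' m : ℕ, a (m + k)) := by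
    rw [hkeq, ← mul_assoc, mul_comm (q ^ k) (qNum q 2), mul_assoc]
    congr 1
    rw [← tsum_mul_left, ← tsum_neg]
    exact tsum_congr hodd
  have hsplit : (∑ i ∈ Finset.range k, a i) + ∑' m : ℕ, a (m + k) = ∑' m : ℕ, a m :=
    hsum.sum_add_tsum_nat_add k
  rw [htail, h0, ← hsplit]
  ring
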